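/- For every real q > −1 and every convex body K ⊂ ℝⁿ, the chord integral I_q(K) is finite. -/

import Mathlib

open MeasureTheory Filter Topology Asymptotics
open scoped RealInnerProductSpace ENNReal NNReal

noncomputable section

namespace ChordDoc

/-- Euclidean `n`-space `ℝⁿ`. -/
abbrev Euc (n : ℕ) := EuclideanSpace ℝ (Fin n)

/-- The unit sphere `S^{n-1}` in `ℝⁿ`. -/
def sph (n : ℕ) : Set (Euc n) := Metric.sphere 0 1

/-- `ω_k`, the volume of the unit ball in `ℝᵏ`. -/
def ballVol (k : ℕ) : ℝ :=
  (volume (Metric.ball (0 : EuclideanSpace ℝ (Fin k)) 1)).toReal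

variable {n : ℕ}

/-- The extended radial function `ρ_{K,z}(u) = sup {t : z + t • u ∈ K}` (`0` if no such `t`). -/
def radial (K : Set (Euc n)) (z u : Euc n) : ℝ := sSup {t : ℝ | z + t • u ∈ K}

/-- `S_z^+ = {u ∈ S^{n-1} : ρ_{K,z}(u) > 0}`. -/
def sPlus (K : Set (Euc n)) (z : Euc n) : Set (Euc n) := {u ∈ sph n | 0 < radial K z u}

/-- The `q`-th dual quermassintegral `Ṽ_q(K, z)`. -/
def dualQ (K : Set (Euc n)) (q : ℝ) (z : Euc n) : ℝ :=
  (1 / (n : ℝ)) * ∫ u in sPlus K z, radial K z u ^ q ∂μH[(n : ℝ) - 1]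

/-- `v` is an outer unit normal of `K` at `z`. -/
def IsOuterNormal (K : Set (Euc n)) (z v : Euc n) : Prop :=
  ‖v‖ = 1 ∧ ∀ x ∈ K, ⟪x, v⟫ ≤ ⟪z, v⟫

/-- `∂'K`, the set of boundary points of `K` with a unique outer unit normal. -/
def regBdry (K : Set (Euc n)) : Set (Euc n) :=
  {z ∈ frontier K | ∃! v, IsOuterNormal K z v}

open scoped Classical in
/-- The Gauss map `ν_K` (junk value `0` off `∂'K`). -/
def gauss (K : Set (Euc n)) (z : Euc n) : Euc n :=
  if h : ∃! v, IsOuterNormal K z v then h.exists.choose else 0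

/-- `ν_K^{-1}(η)`. -/
def gaussPre (K : Set (Euc n)) (η : Set (Euc n)) : Set (Euc n) :=
  {z ∈ regBdry K | gauss K z ∈ η}

/-- The chord measure `F_q(K, η)`. -/
def chordF (K : Set (Euc n)) (q : ℝ) (η : Set (Euc n)) : ℝ :=
  (2 * q / ballVol n) * ∫ z in gaussPre K η, dualQ K (q - 1) z ∂μH[(n : ℝ) - 1]

/-- The cone-chord measure `G_q(K, η)`. -/
def coneChordG (K : Set (Euc n)) (q : ℝ) (η : Set (Euc n)) : ℝ :=
  (2 * q / (((n : ℝ) + q - 1) * ballVol n)) *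
    ∫ z in gaussPre K η, ⟪z, gauss K z⟫ * dualQ K (q - 1) z ∂μH[(n : ℝ) - 1]

open scoped Classical in
/-- The parallel X-ray `X_K(x, u)`: the length of the chord `K ∩ (x + ℝu)`. -/
def xray (K : Set (Euc n)) (x u : Euc n) : ℝ :=
  if {t : ℝ | x + t • u ∈ K}.Nonempty then
    sSup {t : ℝ | x + t • u ∈ K} - sInf {t : ℝ | x + t • u ∈ K}
  else 0

/-- `a^q`, interpreted as `0` when `a = 0` (also for `q ≤ 0`). -/
def cpow (a q : ℝ) : ℝ := if a = 0 then 0 else a ^ q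

/-- The orthogonal projection `K | u^⊥` of `K` onto the hyperplane `u^⊥`. -/
def projHyper (u : Euc n) (K : Set (Euc n)) : Set (Euc n) :=
  (fun x => (Submodule.orthogonalProjectionOnto (Submodule.span ℝ {u})ᗮ x : Euc n)) '' K

/-- The chord integral `I_q(K)`. -/
def chordI (K : Set (Euc n)) (q : ℝ) : ℝ :=
  (1 / ((n : ℝ) * ballVol n)) *
    ∫ u in sph n, (∫ x in projHyper u K, cpow (xray K x u) q ∂μH[(n : ℝ) - 1])
      ∂μH[(n : ℝ) - 1]

/-- The support function `h_K`. -/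
def suppFn (K : Set (Euc n)) (v : Euc n) : ℝ := sSup ((fun x => ⟪x, v⟫) '' K)

/-- The Wulff shape `[h]` of a function `h` on the sphere. -/
def wulff (n : ℕ) (h : Euc n → ℝ) : Set (Euc n) := {x | ∀ v ∈ sph n, ⟪x, v⟫ ≤ h v}

/-- `K` is a convex body: compact, convex, with nonempty interior. -/
def IsConvexBody (K : Set (Euc n)) : Prop :=
  IsCompact K ∧ Convex ℝ K ∧ (interior K).Nonempty


/-! ### Auxiliary lemmas for the finiteness of chord integrals -/

section ChordAux

variable {n : ℕ}

/-- Hausdorff measure of a closed ball in `ℝᵐ` is finite. -/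
lemma aux_pi_ball (m : ℕ) (R : ℝ) :
    μH[(m:ℝ)] (Metric.closedBall (0 : EuclideanSpace ℝ (Fin m)) R) ≠ ⊤ := by
  set κ : ℝ≥0 := (m : ℝ≥0) ^ (2⁻¹ : ℝ) with hκ
  set f : (Fin m → ℝ) → EuclideanSpace ℝ (Fin m) := ⇑(WithLp.equiv 2 (Fin m → ℝ)).symm with hf
  have hlip : LipschitzWith κ f := by
    intro a b
    simpa [f] using PiLp.antilipschitzWith_ofLp 2 (fun _ : Fin m => ℝ) (f a) (f b)
  have hpre : f ⁻¹' (Metric.closedBall 0 R) ⊆ Metric.closedBall (0 : Fin m → ℝ) R := by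
    intro x hx
    simp only [Set.mem_preimage, Metric.mem_closedBall] at hx ⊢
    have h1 := (PiLp.lipschitzWith_ofLp 2 (fun _ : Fin m => ℝ)).dist_le_mul (f x) 0
    simpa [f] using h1.trans (by simpa using hx)
  have hvol : μH[(m:ℝ)] (Metric.closedBall (0 : Fin m → ℝ) R) ≠ ⊤ := by
    have hcast : ((Fintype.card (Fin m) : ℕ) : ℝ) = (m : ℝ) := by simp
    rw [← hcast, hausdorffMeasure_pi_real]
    exact (measure_closedBall_lt_top).ne
  have hmain : μH[(m:ℝ)] (Metric.closedBall (0 : EuclideanSpace ℝ (Fin m)) R)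
      ≤ (κ : ℝ≥0∞) ^ (m:ℝ) * μH[(m:ℝ)] (Metric.closedBall (0 : Fin m → ℝ) R) := by
    calc μH[(m:ℝ)] (Metric.closedBall (0 : EuclideanSpace ℝ (Fin m)) R)
        = μH[(m:ℝ)] (f '' (f ⁻¹' Metric.closedBall 0 R)) := by
          rw [Set.image_preimage_eq _ (Equiv.surjective _)]
      _ ≤ (κ : ℝ≥0∞) ^ (m:ℝ) * μH[(m:ℝ)] (f ⁻¹' Metric.closedBall 0 R) :=
          hlip.hausdorffMeasure_image_le (Nat.cast_nonneg m) _
      _ ≤ (κ : ℝ≥0∞) ^ (m:ℝ) * μH[(m:ℝ)] (Metric.closedBall (0 : Fin m → ℝ) R) :=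
          mul_le_mul_right (measure_mono hpre) _
  exact ne_top_of_le_ne_top
    (ENNReal.mul_ne_top (ENNReal.rpow_ne_top_of_nonneg (Nat.cast_nonneg m) ENNReal.coe_ne_top)
      hvol) hmain

/-- A bounded subset of an `(n-1)`-dimensional subspace of `ℝⁿ` has `μH[n-1]`-measure at most
that of the closed ball of the same radius in `ℝ^{n-1}`. -/
lemma aux_subspace {n : ℕ} (hn : 1 ≤ n) (W : Submodule ℝ (Euc n))
    (hW : Module.finrank ℝ W = n - 1) {s : Set (Euc n)} (hsW : s ⊆ (W : Set (Euc n)))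
    {R : ℝ} (hsR : s ⊆ Metric.closedBall 0 R) :
    μH[(n:ℝ)-1] s ≤ μH[((n-1:ℕ):ℝ)] (Metric.closedBall (0 : EuclideanSpace ℝ (Fin (n-1))) R) := by
  have hd : (0:ℝ) ≤ (n:ℝ) - 1 := by
    have : (1:ℝ) ≤ (n:ℝ) := by exact_mod_cast hn
    linarith
  have hc1 : ((n-1:ℕ):ℝ) = (n:ℝ) - 1 := by
    rw [Nat.cast_sub hn]; norm_num
  rw [← hW]
  have hc2 : ((Module.finrank ℝ W : ℕ):ℝ) = (n:ℝ) - 1 := by rw [hW]; exact hc1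
  rw [hc2]
  set e := (stdOrthonormalBasis ℝ W).repr with he
  set s' : Set W := (Subtype.val) ⁻¹' s with hs'
  have hs_img : Subtype.val '' s' = s := by
    apply Set.image_preimage_eq_of_subset
    rw [Subtype.range_coe]; exact hsW
  calc μH[(n:ℝ)-1] s = μH[(n:ℝ)-1] (Subtype.val '' s') := by rw [hs_img]
    _ = μH[(n:ℝ)-1] s' := Isometry.hausdorffMeasure_image isometry_subtype_coe (Or.inl hd) _
    _ = μH[(n:ℝ)-1] (e '' s') := (e.isometry.hausdorffMeasure_image (Or.inl hd) s').symm
    _ ≤ μH[(n:ℝ)-1]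
          (Metric.closedBall (0 : EuclideanSpace ℝ (Fin (Module.finrank ℝ ↥W))) R) := by
        have hsub2 : (⇑e '' s') ⊆
            Metric.closedBall (0 : EuclideanSpace ℝ (Fin (Module.finrank ℝ ↥W))) R := by
          rintro y ⟨z, hz, rfl⟩
          rw [mem_closedBall_zero_iff, e.norm_map]
          exact mem_closedBall_zero_iff.mp (hsR hz)
        exact measure_mono hsub2

open Metric in
private def _dummy : Unit := ()


lemma aux_span_orthogonal_finrank {n : ℕ} {u : Euc n} (hu : u ≠ 0) :
    Module.finrank ℝ ↥((Submodule.span ℝ {u})ᗮ) = n - 1 := by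
  have h1 : Module.finrank ℝ ↥(Submodule.span ℝ {u}) = 1 := finrank_span_singleton hu
  have h2 := Submodule.finrank_add_finrank_orthogonal (K := Submodule.span ℝ {u}) (𝕜 := ℝ)
  rw [h1, finrank_euclideanSpace_fin] at h2
  omega

set_option maxHeartbeats 2000000 in
lemma aux_sphere {n : ℕ} (hn : 2 ≤ n) : μH[(n:ℝ)-1] (sph n) ≠ ⊤ := by
  classical
  have hn1 : 1 ≤ n := by omega
  have : Nonempty (Fin n) := ⟨⟨0, by omega⟩⟩
  have hnR : (1:ℝ) ≤ (n:ℝ) := by exact_mod_cast hn1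
  have hn0 : (0:ℝ) < (n:ℝ) := by linarith
  have hd : (0:ℝ) ≤ (n:ℝ)-1 := by linarith
  set e : Fin n → Euc n := fun i => EuclideanSpace.single i 1 with he
  have hnorm_e : ∀ i, ‖e i‖ = 1 := fun i => by simp [e]
  have he0 : ∀ i, e i ≠ 0 := by
    intro i h0
    have := hnorm_e i; rw [h0, norm_zero] at this; norm_num at this
  set D : Fin n → Set (Euc n) := fun i =>
    {y : Euc n | y ∈ (Submodule.span ℝ {e i})ᗮ ∧ ‖y‖^2 ≤ 1 - 1/(n:ℝ)} with hD
  set g : Fin n × Bool → Euc n → Euc n := fun p y =>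
    y + ((if p.2 then (1:ℝ) else -1) * Real.sqrt (1 - ‖y‖^2)) • e p.1 with hg
  have hee : ∀ i, ⟪e i, e i⟫ = (1:ℝ) := by
    intro i
    simp [e, EuclideanSpace.inner_single_left, EuclideanSpace.single_apply]
  -- covering
  have hcover : sph n ⊆ ⋃ p : Fin n × Bool, g p '' D p.1 := by
    intro x hx
    have hx1 : ‖x‖ = 1 := by
      simpa [sph, mem_sphere_zero_iff_norm] using hx
    have hsum : ∑ i, (x i)^2 = 1 := by
      have h1 := EuclideanSpace.norm_eq x
      rw [hx1] at h1
      have h3 : (∑ i, ‖x i‖^2) = 1 := Real.sqrt_eq_one.mp h1.symm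
      simpa [Real.norm_eq_abs, sq_abs] using h3
    obtain ⟨i, -, hi⟩ : ∃ i ∈ Finset.univ, (1:ℝ)/n ≤ (x i)^2 := by
      apply Finset.exists_le_of_sum_le Finset.univ_nonempty
      rw [hsum]
      rw [Finset.sum_const, Finset.card_univ, Fintype.card_fin, nsmul_eq_mul]
      rw [mul_one_div, div_self (ne_of_gt hn0)]
    set y : Euc n := x - (x i) • e i with hy
    have hex : ⟪e i, x⟫ = x i := by simp [e, EuclideanSpace.inner_single_left]
    have hxe : ⟪x, e i⟫ = x i := by rw [real_inner_comm]; exact hex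
    have hyW : y ∈ (Submodule.span ℝ {e i})ᗮ := by
      rw [Submodule.mem_orthogonal_singleton_iff_inner_right]
      rw [hy, inner_sub_right, real_inner_smul_right, hee, hex]; ring
    have hy2 : ‖y‖^2 = 1 - (x i)^2 := by
      rw [hy, norm_sub_sq_real, real_inner_smul_right, hxe, hx1, norm_smul, hnorm_e i,
        Real.norm_eq_abs, mul_one, sq_abs]
      ring
    have hyD : y ∈ D i := ⟨hyW, by rw [hy2]; linarith⟩
    have hsq : Real.sqrt (1 - ‖y‖^2) = |x i| := by
      rw [hy2, show (1:ℝ) - (1 - (x i)^2) = (x i)^2 by ring, Real.sqrt_sq_eq_abs]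
    by_cases hxi : 0 ≤ x i
    · refine Set.mem_iUnion.mpr ⟨(i, true), ⟨y, hyD, ?_⟩⟩
      have hcoef : (if (true:Bool) then (1:ℝ) else -1) * Real.sqrt (1 - ‖y‖^2) = x i := by
        rw [hsq]; simp [abs_of_nonneg hxi]
      show y + ((if (true:Bool) then (1:ℝ) else -1) * Real.sqrt (1 - ‖y‖^2)) • e i = x
      rw [hcoef, hy]
      exact sub_add_cancel x ((x i) • e i)
    · refine Set.mem_iUnion.mpr ⟨(i, false), ⟨y, hyD, ?_⟩⟩
      have hcoef : (if (false:Bool) then (1:ℝ) else -1) * Real.sqrt (1 - ‖y‖^2) = x i := by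
        rw [hsq, abs_of_neg (not_le.mp hxi)]; simp
      show y + ((if (false:Bool) then (1:ℝ) else -1) * Real.sqrt (1 - ‖y‖^2)) • e i = x
      rw [hcoef, hy]
      exact sub_add_cancel x ((x i) • e i)
  -- Lipschitz bound
  have hlip : ∀ p : Fin n × Bool, LipschitzOnWith (2*n+1 : ℝ≥0) (g p) (D p.1) := by
    rintro ⟨i, b⟩
    rw [lipschitzOnWith_iff_dist_le_mul]
    intro y hy z hz
    obtain ⟨-, hy2⟩ := hy
    obtain ⟨-, hz2⟩ := hz
    have h1n : (0:ℝ) < 1/n := by positivity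
    set A := 1 - ‖y‖^2 with hA
    set B := 1 - ‖z‖^2 with hB
    have hAlb : 1/(n:ℝ) ≤ A := by simp only [hA]; linarith
    have hBlb : 1/(n:ℝ) ≤ B := by simp only [hB]; linarith
    have hsA : Real.sqrt A ^ 2 = A := Real.sq_sqrt (by linarith)
    have hsB : Real.sqrt B ^ 2 = B := Real.sq_sqrt (by linarith)
    have hsAlb : 1/(n:ℝ) ≤ Real.sqrt A := by
      rw [Real.le_sqrt (by positivity) (by linarith)]
      nlinarith
    have habs : |Real.sqrt A - Real.sqrt B| * (Real.sqrt A + Real.sqrt B) = |A - B| := by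
      rw [← abs_of_nonneg (show (0:ℝ) ≤ Real.sqrt A + Real.sqrt B by positivity), ← abs_mul]
      congr 1
      have hr : (Real.sqrt A - Real.sqrt B) * (Real.sqrt A + Real.sqrt B)
          = Real.sqrt A ^ 2 - Real.sqrt B ^ 2 := by ring
      rw [hr, hsA, hsB]
    have hyn : ‖y‖ ≤ 1 := by nlinarith [norm_nonneg y]
    have hzn : ‖z‖ ≤ 1 := by nlinarith [norm_nonneg z]
    have hAB : |A - B| ≤ 2 * dist y z := by
      have h0 : A - B = (‖z‖ - ‖y‖) * (‖z‖ + ‖y‖) := by simp only [hA, hB]; ring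
      rw [h0, abs_mul, abs_of_nonneg (by positivity : (0:ℝ) ≤ ‖z‖+‖y‖), dist_eq_norm]
      have h1 : |‖z‖ - ‖y‖| ≤ ‖y - z‖ := by
        have h2 := abs_norm_sub_norm_le z y
        rwa [norm_sub_rev] at h2
      nlinarith [abs_nonneg (‖z‖-‖y‖), norm_nonneg (y - z), hyn, hzn]
    have hsum_lb : 1/(n:ℝ) ≤ Real.sqrt A + Real.sqrt B := by
      have := Real.sqrt_nonneg B; linarith
    have h5 : |Real.sqrt A - Real.sqrt B| * (1/n) ≤ |A - B| := by
      calc |Real.sqrt A - Real.sqrt B| * (1/n)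
          ≤ |Real.sqrt A - Real.sqrt B| * (Real.sqrt A + Real.sqrt B) :=
            mul_le_mul_of_nonneg_left hsum_lb (abs_nonneg _)
        _ = |A - B| := habs
    have h6 : |Real.sqrt A - Real.sqrt B| ≤ |A - B| * n := by
      have h7 := mul_le_mul_of_nonneg_right h5 (le_of_lt hn0)
      rwa [mul_assoc, one_div, inv_mul_cancel₀ (ne_of_gt hn0), mul_one] at h7
    have hkey : |Real.sqrt A - Real.sqrt B| ≤ 2*n * dist y z := by
      nlinarith [mul_le_mul_of_nonneg_right hAB hn0.le]
    -- now the norm computation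
    set σ : ℝ := if b then (1:ℝ) else -1 with hσ
    have hσabs : |σ| = 1 := by cases b <;> simp [hσ]
    have hgdiff : g (i, b) y - g (i, b) z
        = (y - z) + ((σ * Real.sqrt A - σ * Real.sqrt B)) • e i := by
      show (y + (σ * Real.sqrt A) • e i) - (z + (σ * Real.sqrt B) • e i)
          = (y - z) + ((σ * Real.sqrt A - σ * Real.sqrt B)) • e i
      rw [add_sub_add_comm, ← sub_smul]
    have hw : ‖(σ * Real.sqrt A - σ * Real.sqrt B) • e i‖ = |Real.sqrt A - Real.sqrt B| := by
      rw [norm_smul, hnorm_e i, mul_one, Real.norm_eq_abs,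
        show σ * Real.sqrt A - σ * Real.sqrt B = σ * (Real.sqrt A - Real.sqrt B) by ring,
        abs_mul, hσabs, one_mul]
    have hcoe : ((2*n+1 : ℝ≥0) : ℝ) = 2*(n:ℝ)+1 := by push_cast; ring
    rw [dist_eq_norm, hgdiff, hcoe]
    calc ‖(y - z) + (σ * Real.sqrt A - σ * Real.sqrt B) • e i‖
        ≤ ‖y - z‖ + ‖(σ * Real.sqrt A - σ * Real.sqrt B) • e i‖ := norm_add_le _ _
      _ ≤ dist y z + 2*n * dist y z := by
          rw [hw, ← dist_eq_norm]
          exact add_le_add le_rfl hkey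
      _ = (2*(n:ℝ)+1) * dist y z := by ring
  -- each piece has finite measure
  have hfin : ∀ p : Fin n × Bool, μH[(n:ℝ)-1] (g p '' D p.1) ≠ ⊤ := by
    intro p
    have hDsub1 : D p.1 ⊆ ((Submodule.span ℝ {e p.1})ᗮ : Set (Euc n)) := fun y hy => hy.1
    have hDsub2 : D p.1 ⊆ Metric.closedBall 0 1 := by
      intro y hy
      rw [mem_closedBall_zero_iff]
      nlinarith [hy.2, norm_nonneg y, one_div_pos.mpr hn0]
    have hDfin := aux_subspace hn1 _ (aux_span_orthogonal_finrank (he0 p.1)) hDsub1 hDsub2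
    refine ne_top_of_le_ne_top ?_ ((hlip p).hausdorffMeasure_image_le hd)
    exact ENNReal.mul_ne_top (ENNReal.rpow_ne_top_of_nonneg hd ENNReal.coe_ne_top)
      (ne_top_of_le_ne_top (aux_pi_ball (n-1) 1) hDfin)
  have hle : μH[(n:ℝ)-1] (sph n) ≤ ∑' p : Fin n × Bool, μH[(n:ℝ)-1] (g p '' D p.1) :=
    (measure_mono hcover).trans (measure_iUnion_le _)
  rw [tsum_fintype] at hle
  exact ne_top_of_le_ne_top
    (ENNReal.sum_lt_top.mpr (fun p _ => lt_top_iff_ne_top.mpr (hfin p))).ne hle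


section ChordGeometry

variable {K : Set (Euc n)} {u : Euc n}

/-- The set of parameters of the chord of `K` through `x` in direction `u`. -/
def chordSet (K : Set (Euc n)) (u x : Euc n) : Set ℝ := {t : ℝ | x + t • u ∈ K}

open scoped Classical in
lemma xray_eq (K : Set (Euc n)) (x u : Euc n) :
    xray K x u = if (chordSet K u x).Nonempty then
      sSup (chordSet K u x) - sInf (chordSet K u x) else 0 := rfl

lemma xray_of_nonempty {x : Euc n} (h : (chordSet K u x).Nonempty) :
    xray K x u = sSup (chordSet K u x) - sInf (chordSet K u x) := by
  rw [xray_eq, if_pos h]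

lemma chordSet_isCompact (hKc : IsCompact K) (hu : ‖u‖ = 1) (x : Euc n) :
    IsCompact (chordSet K u x) := by
  obtain ⟨R, hR⟩ := hKc.isBounded.subset_closedBall 0
  have hcl : IsClosed (chordSet K u x) := by
    have hcont : Continuous fun t : ℝ => x + t • u :=
      continuous_const.add (continuous_id.smul continuous_const)
    exact hKc.isClosed.preimage hcont
  refine IsCompact.of_isClosed_subset (isCompact_Icc (a := -(R + ‖x‖)) (b := R + ‖x‖)) hcl ?_
  intro t ht
  have h1 : ‖x + t • u‖ ≤ R := mem_closedBall_zero_iff.mp (hR ht)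
  have h2 : |t| = ‖t • u‖ := by rw [norm_smul, hu, mul_one, Real.norm_eq_abs]
  have h3 : ‖t • u‖ = ‖(x + t • u) - x‖ := by congr 1; abel
  have h4 : ‖(x + t • u) - x‖ ≤ ‖x + t • u‖ + ‖x‖ := norm_sub_le _ _
  have h5 : |t| ≤ R + ‖x‖ := by rw [h2, h3]; linarith
  exact abs_le.mp h5

lemma sSup_mem_chordSet (hKc : IsCompact K) (hu : ‖u‖ = 1) {x : Euc n}
    (h : (chordSet K u x).Nonempty) : sSup (chordSet K u x) ∈ chordSet K u x :=
  (chordSet_isCompact hKc hu x).sSup_mem h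

lemma sInf_mem_chordSet (hKc : IsCompact K) (hu : ‖u‖ = 1) {x : Euc n}
    (h : (chordSet K u x).Nonempty) : sInf (chordSet K u x) ∈ chordSet K u x :=
  (chordSet_isCompact hKc hu x).sInf_mem h

lemma xray_nonneg (hKc : IsCompact K) (hu : ‖u‖ = 1) {x : Euc n}
    (h : (chordSet K u x).Nonempty) : 0 ≤ xray K x u := by
  rw [xray_of_nonempty h]
  have h1 := csInf_le (chordSet_isCompact hKc hu x).bddBelow (sSup_mem_chordSet hKc hu h)
  linarith

lemma xray_le_diam (hKc : IsCompact K) (hu : ‖u‖ = 1) {x : Euc n}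
    (h : (chordSet K u x).Nonempty) : xray K x u ≤ Metric.diam K := by
  have htop := sSup_mem_chordSet hKc hu h
  have hbot := sInf_mem_chordSet hKc hu h
  have hd := Metric.dist_le_diam_of_mem hKc.isBounded htop hbot
  have h1 : dist (x + sSup (chordSet K u x) • u) (x + sInf (chordSet K u x) • u)
      = |sSup (chordSet K u x) - sInf (chordSet K u x)| := by
    rw [dist_eq_norm, show (x + sSup (chordSet K u x) • u) - (x + sInf (chordSet K u x) • u)
        = (sSup (chordSet K u x) - sInf (chordSet K u x)) • u by rw [add_sub_add_comm, ← sub_smul]; abel,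
      norm_smul, hu, mul_one, Real.norm_eq_abs]
  rw [xray_of_nonempty h]
  have h2 := le_abs_self (sSup (chordSet K u x) - sInf (chordSet K u x))
  rw [h1] at hd
  linarith

lemma chordSet_combo (hKv : Convex ℝ K) {x y : Euc n} {tx ty a b : ℝ}
    (ha : 0 ≤ a) (hb : 0 ≤ b) (hab : a + b = 1)
    (hx : tx ∈ chordSet K u x) (hy : ty ∈ chordSet K u y) :
    a * tx + b * ty ∈ chordSet K u (a • x + b • y) := by
  have h := hKv hx hy ha hb hab
  show a • x + b • y + (a * tx + b * ty) • u ∈ K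
  have heq : a • x + b • y + (a * tx + b * ty) • u
      = a • (x + tx • u) + b • (y + ty • u) := by module
  rw [heq]; exact h

lemma xray_concave (hKc : IsCompact K) (hKv : Convex ℝ K) (hu : ‖u‖ = 1) {x y : Euc n}
    (hx : (chordSet K u x).Nonempty) (hy : (chordSet K u y).Nonempty) {a b : ℝ}
    (ha : 0 ≤ a) (hb : 0 ≤ b) (hab : a + b = 1) :
    a * xray K x u + b * xray K y u ≤ xray K (a • x + b • y) u := by
  have hz1 := chordSet_combo (u := u) hKv ha hb hab (sSup_mem_chordSet hKc hu hx)
    (sSup_mem_chordSet hKc hu hy)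
  have hz2 := chordSet_combo (u := u) hKv ha hb hab (sInf_mem_chordSet hKc hu hx)
    (sInf_mem_chordSet hKc hu hy)
  have hzne : (chordSet K u (a • x + b • y)).Nonempty := ⟨_, hz1⟩
  rw [xray_of_nonempty hx, xray_of_nonempty hy, xray_of_nonempty hzne]
  have h1 := le_csSup (chordSet_isCompact hKc hu (a • x + b • y)).bddAbove hz1
  have h2 := csInf_le (chordSet_isCompact hKc hu (a • x + b • y)).bddBelow hz2
  nlinarith

lemma mem_projHyper_structure (hu : ‖u‖ = 1) {x : Euc n} (hx : x ∈ projHyper u K) :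
    x ∈ ((Submodule.span ℝ {u})ᗮ : Set (Euc n)) ∧ ∃ k ∈ K, ∃ t : ℝ, x + t • u = k := by
  obtain ⟨k, hk, rfl⟩ := hx
  refine ⟨(Submodule.orthogonalProjectionOnto (Submodule.span ℝ {u})ᗮ k).2, k, hk, ?_⟩
  have h1 : k - (Submodule.orthogonalProjectionOnto (Submodule.span ℝ {u})ᗮ k : Euc n) ∈ (Submodule.span ℝ {u})ᗮᗮ :=
    Submodule.sub_starProjection_mem_orthogonal (K := (Submodule.span ℝ {u})ᗮ) k
  rw [Submodule.orthogonal_orthogonal] at h1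
  obtain ⟨t, ht⟩ := Submodule.mem_span_singleton.mp h1
  refine ⟨t, ?_⟩
  show ((Submodule.orthogonalProjectionOnto (Submodule.span ℝ {u})ᗮ k : Euc n)) + t • u = k
  rw [ht]; abel

lemma chordSet_nonempty_of_mem_projHyper (hu : ‖u‖ = 1) {x : Euc n}
    (hx : x ∈ projHyper u K) : (chordSet K u x).Nonempty := by
  obtain ⟨-, k, hk, t, ht⟩ := mem_projHyper_structure hu hx
  exact ⟨t, show x + t • u ∈ K from ht ▸ hk⟩

lemma norm_le_of_mem_projHyper {x : Euc n} (hx : x ∈ projHyper u K) {R : ℝ}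
    (hKR : K ⊆ Metric.closedBall 0 R) : ‖x‖ ≤ R := by
  obtain ⟨k, hk, rfl⟩ := hx
  have h1 : ‖(Submodule.orthogonalProjectionOnto (Submodule.span ℝ {u})ᗮ k : Euc n)‖ ≤ ‖k‖ := by
    calc ‖(Submodule.orthogonalProjectionOnto (Submodule.span ℝ {u})ᗮ k : Euc n)‖
        = ‖Submodule.orthogonalProjectionOnto (Submodule.span ℝ {u})ᗮ k‖ := rfl
      _ ≤ ‖Submodule.orthogonalProjectionOnto (Submodule.span ℝ {u})ᗮ‖ * ‖k‖ :=
          (Submodule.orthogonalProjectionOnto (Submodule.span ℝ {u})ᗮ).le_opNorm k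
      _ ≤ 1 * ‖k‖ := by
          apply mul_le_mul_of_nonneg_right (Submodule.orthogonalProjectionOnto_norm_le _) (norm_nonneg k)
      _ = ‖k‖ := one_mul _
  exact h1.trans (mem_closedBall_zero_iff.mp (hKR hk))

lemma projHyper_isCompact (hKc : IsCompact K) : IsCompact (projHyper u K) :=
  hKc.image (continuous_subtype_val.comp (Submodule.orthogonalProjectionOnto (Submodule.span ℝ {u})ᗮ).continuous)

lemma projHyper_convex (hKv : Convex ℝ K) : Convex ℝ (projHyper u K) :=
  hKv.linear_image (((Submodule.span ℝ {u})ᗮ.subtype).comp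
    (Submodule.orthogonalProjectionOnto (Submodule.span ℝ {u})ᗮ).toLinearMap)

end ChordGeometry

end ChordAux


section ChordCore

variable {n : ℕ} {K : Set (Euc n)} {u : Euc n}

lemma homothety_apply' (x₀ y : Euc n) (t : ℝ) :
    AffineMap.homothety x₀ (1-t) y = (1-t) • y + t • x₀ := by
  rw [AffineMap.homothety_apply]
  simp only [vsub_eq_sub, vadd_eq_add, smul_sub]
  module

lemma homothety_image_subset (hKv : Convex ℝ K) {x₀ : Euc n} (hx₀ : x₀ ∈ projHyper u K)
    {t : ℝ} (ht0 : 0 ≤ t) (ht1 : t ≤ 1) :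
    AffineMap.homothety x₀ (1-t) '' projHyper u K ⊆ projHyper u K := by
  rintro - ⟨y, hy, rfl⟩
  rw [homothety_apply']
  exact projHyper_convex hKv hy hx₀ (by linarith) ht0 (by ring)

lemma sublevel_bound (hn : 2 ≤ n) (hKc : IsCompact K) (hKv : Convex ℝ K)
    {x₀ : Euc n} (hx₀ : x₀ ∈ projHyper u K) {t : ℝ} (ht0 : 0 < t) (ht1 : t ≤ 1)
    (hCfin : μH[(n:ℝ)-1] (projHyper u K) ≠ ⊤) :
    μH[(n:ℝ)-1] (projHyper u K \ (AffineMap.homothety x₀ (1-t) '' projHyper u K))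
      ≤ ENNReal.ofReal (((n:ℝ)-1)*t) * μH[(n:ℝ)-1] (projHyper u K) := by
  have hn2R : (2:ℝ) ≤ (n:ℝ) := by exact_mod_cast hn
  have hd : (0:ℝ) ≤ (n:ℝ)-1 := by linarith
  have hn1 : 1 ≤ n := by omega
  have hnc : ((n-1:ℕ):ℝ) = (n:ℝ)-1 := by rw [Nat.cast_sub hn1]; norm_num
  have hHsubC := homothety_image_subset hKv hx₀ ht0.le ht1
  rcases lt_or_ge t 1 with hlt | hge
  · -- t < 1
    have hc0 : (1:ℝ) - t ≠ 0 := ne_of_gt (by linarith)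
    have hHmeas : μH[(n:ℝ)-1] (AffineMap.homothety x₀ (1-t) '' projHyper u K)
        = ‖(1:ℝ)-t‖₊ ^ ((n:ℝ)-1) • μH[(n:ℝ)-1] (projHyper u K) :=
      hausdorffMeasure_homothety_image hd x₀ hc0 _
    have hHcompact : IsCompact (AffineMap.homothety x₀ (1-t) '' projHyper u K) :=
      (projHyper_isCompact hKc).image (AffineMap.homothety_continuous x₀ (1-t))
    have hHfin : μH[(n:ℝ)-1] (AffineMap.homothety x₀ (1-t) '' projHyper u K) ≠ ⊤ :=
      ne_top_of_le_ne_top hCfin (measure_mono hHsubC)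
    rw [measure_diff hHsubC hHcompact.isClosed.measurableSet.nullMeasurableSet hHfin,
      tsub_le_iff_right, hHmeas]
    have hsm : (‖(1:ℝ)-t‖₊ ^ ((n:ℝ)-1) • μH[(n:ℝ)-1] (projHyper u K) : ℝ≥0∞)
        = ENNReal.ofReal ((1-t)^(n-1 : ℕ)) * μH[(n:ℝ)-1] (projHyper u K) := by
      rw [ENNReal.smul_def, smul_eq_mul]
      congr 1
      have h8 : ‖(1:ℝ)-t‖₊ ^ ((n:ℝ)-1) = ((1:ℝ)-t).toNNReal ^ (n-1:ℕ) := by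
        rw [Real.nnnorm_of_nonneg (by linarith), ← hnc, NNReal.rpow_natCast,
          Real.toNNReal_of_nonneg (by linarith)]
      rw [h8, ENNReal.coe_pow, ENNReal.ofReal_pow (by linarith)]
      rfl
    rw [hsm, ← add_mul]
    have hco : (1:ℝ≥0∞) ≤ ENNReal.ofReal (((n:ℝ)-1)*t) + ENNReal.ofReal ((1-t)^(n-1:ℕ)) := by
      rw [← ENNReal.ofReal_add (by nlinarith) (pow_nonneg (by linarith) _)]
      apply ENNReal.one_le_ofReal.mpr
      have hbern := one_add_mul_le_pow (a := -t) (by linarith) (n-1)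
      rw [hnc] at hbern
      have h2 : (1 + -t : ℝ) = 1 - t := by ring
      rw [h2] at hbern
      nlinarith
    calc μH[(n:ℝ)-1] (projHyper u K) = 1 * μH[(n:ℝ)-1] (projHyper u K) := (one_mul _).symm
      _ ≤ _ := mul_le_mul_left hco _
  · -- t = 1 (or ≥ 1)
    refine (measure_mono Set.diff_subset).trans ?_
    have h1 : (1:ℝ≥0∞) ≤ ENNReal.ofReal (((n:ℝ)-1)*t) :=
      ENNReal.one_le_ofReal.mpr (by nlinarith)
    calc μH[(n:ℝ)-1] (projHyper u K) = 1 * μH[(n:ℝ)-1] (projHyper u K) := (one_mul _).symm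
      _ ≤ _ := mul_le_mul_left h1 _

set_option maxHeartbeats 2000000 in
lemma inner_le (hn : 2 ≤ n) (hKc : IsCompact K) (hKv : Convex ℝ K)
    {c : Euc n} {r R : ℝ} (hr : 0 < r) (hball : Metric.closedBall c r ⊆ K)
    (hKR : K ⊆ Metric.closedBall 0 R) {q : ℝ} (hq : -1 < q) (hu : ‖u‖ = 1) :
    ∫⁻ x in projHyper u K, ENNReal.ofReal (cpow (xray K x u) q) ∂μH[(n:ℝ)-1]
      ≤ (ENNReal.ofReal ((Metric.diam K + 1)^q) + (ENNReal.ofReal ((2*r)^q)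
          + ∑' j : ℕ, ENNReal.ofReal ((2*r*(1/2)^(j+1))^q)
              * ENNReal.ofReal (((n:ℝ)-1)*(1/2)^j)))
        * μH[((n-1:ℕ):ℝ)] (Metric.closedBall (0 : EuclideanSpace ℝ (Fin (n-1))) R) := by
  classical
  have hn1 : 1 ≤ n := by omega
  have hn2R : (2:ℝ) ≤ (n:ℝ) := by exact_mod_cast hn
  have hd : (0:ℝ) ≤ (n:ℝ)-1 := by linarith
  have hu0 : u ≠ 0 := by
    intro h; rw [h, norm_zero] at hu; norm_num at hu
  set C := projHyper u K with hC
  set VB := μH[((n-1:ℕ):ℝ)] (Metric.closedBall (0 : EuclideanSpace ℝ (Fin (n-1))) R) with hVB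
  have hCsubW : C ⊆ ((Submodule.span ℝ {u})ᗮ : Set (Euc n)) :=
    fun x hx => (mem_projHyper_structure hu hx).1
  have hCsubB : C ⊆ Metric.closedBall 0 R :=
    fun x hx => mem_closedBall_zero_iff.mpr (norm_le_of_mem_projHyper hx hKR)
  have hCle : μH[(n:ℝ)-1] C ≤ VB :=
    aux_subspace hn1 _ (aux_span_orthogonal_finrank hu0) hCsubW hCsubB
  have hVBfin : VB ≠ ⊤ := aux_pi_ball (n-1) R
  have hCfin : μH[(n:ℝ)-1] C ≠ ⊤ := ne_top_of_le_ne_top hVBfin hCle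
  have hne : ∀ x ∈ C, (chordSet K u x).Nonempty :=
    fun x hx => chordSet_nonempty_of_mem_projHyper hu hx
  have hX0 : ∀ x ∈ C, 0 ≤ xray K x u := fun x hx => xray_nonneg hKc hu (hne x hx)
  have hXD : ∀ x ∈ C, xray K x u ≤ Metric.diam K := fun x hx => xray_le_diam hKc hu (hne x hx)
  have hCmeas : MeasurableSet C := (projHyper_isCompact hKc).isClosed.measurableSet
  set f : Euc n → ℝ≥0∞ := fun x => ENNReal.ofReal (cpow (xray K x u) q) with hf
  rcases le_or_gt 0 q with hq0 | hq0
  · -- q ≥ 0 : bounded integrand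
    have hpt : ∀ x ∈ C, f x ≤ ENNReal.ofReal ((Metric.diam K + 1)^q) := by
      intro x hx
      simp only [f]
      apply ENNReal.ofReal_le_ofReal
      by_cases h0 : xray K x u = 0
      · rw [cpow, if_pos h0]; positivity
      · rw [cpow, if_neg h0]
        exact Real.rpow_le_rpow (hX0 x hx) (by have := hXD x hx; linarith) hq0
    calc ∫⁻ x in C, f x ∂μH[(n:ℝ)-1]
        ≤ ∫⁻ _x in C, ENNReal.ofReal ((Metric.diam K + 1)^q) ∂μH[(n:ℝ)-1] :=
          setLIntegral_mono' hCmeas hpt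
      _ = ENNReal.ofReal ((Metric.diam K + 1)^q) * μH[(n:ℝ)-1] C := setLIntegral_const _ _
      _ ≤ _ := mul_le_mul le_self_add hCle zero_le zero_le
  · -- q < 0
    have hcK : c ∈ K := hball (Metric.mem_closedBall_self hr.le)
    set x₀ : Euc n := (Submodule.orthogonalProjectionOnto (Submodule.span ℝ {u})ᗮ c : Euc n) with hx₀def
    have hx₀C : x₀ ∈ C := ⟨c, hcK, rfl⟩
    have h1 : c - x₀ ∈ (Submodule.span ℝ {u})ᗮᗮ :=
      Submodule.sub_starProjection_mem_orthogonal (K := (Submodule.span ℝ {u})ᗮ) c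
    rw [Submodule.orthogonal_orthogonal] at h1
    obtain ⟨t₀, ht₀⟩ := Submodule.mem_span_singleton.mp h1
    have hmem : ∀ s : ℝ, |s| ≤ r → t₀ + s ∈ chordSet K u x₀ := by
      intro s hs
      show x₀ + (t₀ + s) • u ∈ K
      apply hball
      rw [Metric.mem_closedBall, dist_eq_norm]
      have heq : x₀ + (t₀ + s) • u - c = s • u := by
        rw [add_smul, ht₀]; abel
      rw [heq, norm_smul, hu, mul_one, Real.norm_eq_abs]; exact hs
    have hXx₀ : 2*r ≤ xray K x₀ u := by
      have hp := hmem r (by rw [abs_of_nonneg hr.le])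
      have hm := hmem (-r) (by rw [abs_neg, abs_of_nonneg hr.le])
      have hnex₀ : (chordSet K u x₀).Nonempty := ⟨_, hp⟩
      rw [xray_of_nonempty hnex₀]
      have h2 := le_csSup (chordSet_isCompact hKc hu x₀).bddAbove hp
      have h3 := csInf_le (chordSet_isCompact hKc hu x₀).bddBelow hm
      linarith
    set Ht : ℕ → Set (Euc n) := fun j => AffineMap.homothety x₀ (1-(1/2:ℝ)^j) '' C with hHt
    have hHtsub : ∀ j, Ht j ⊆ C := fun j =>
      homothety_image_subset hKv hx₀C (by positivity)
        (pow_le_one₀ (by norm_num) (by norm_num))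
    have hXHt : ∀ j, ∀ z ∈ Ht j, 2*r*(1/2)^j ≤ xray K z u := by
      intro j z hz
      obtain ⟨y, hy, rfl⟩ := hz
      rw [homothety_apply']
      have hp1 : ((1:ℝ)/2)^j ≤ 1 := pow_le_one₀ (by norm_num) (by norm_num)
      have hp0 : (0:ℝ) < (1/2:ℝ)^j := by positivity
      have hcon := xray_concave hKc hKv hu (hne y hy) (hne x₀ hx₀C)
        (a := 1-(1/2:ℝ)^j) (b := (1/2:ℝ)^j) (by linarith) hp0.le (by ring)
      have hXy := hX0 y hy
      nlinarith [hXx₀]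
    have hdiff : ∀ j : ℕ, μH[(n:ℝ)-1] (C \ Ht j)
        ≤ ENNReal.ofReal (((n:ℝ)-1) * (1/2)^j) * μH[(n:ℝ)-1] C := fun j =>
      sublevel_bound hn hKc hKv hx₀C (by positivity)
        (pow_le_one₀ (by norm_num) (by norm_num)) hCfin
    set N := C \ ⋃ j, Ht j with hN
    have hNzero : μH[(n:ℝ)-1] N = 0 := by
      have hNle : ∀ j : ℕ, μH[(n:ℝ)-1] N ≤ ENNReal.ofReal (((n:ℝ)-1) * (1/2)^j) * μH[(n:ℝ)-1] C := by
        intro j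
        refine (measure_mono ?_).trans (hdiff j)
        exact Set.diff_subset_diff_right (Set.subset_iUnion _ j)
      have h1 : Tendsto (fun j : ℕ => ((n:ℝ)-1) * (1/2)^j) atTop (𝓝 0) := by
        simpa using (tendsto_pow_atTop_nhds_zero_of_lt_one (by norm_num : (0:ℝ) ≤ 1/2)
          (by norm_num)).const_mul ((n:ℝ)-1)
      have h2 : Tendsto (fun j : ℕ => ENNReal.ofReal (((n:ℝ)-1) * (1/2)^j)) atTop (𝓝 0) := by
        have h3 := (ENNReal.continuous_ofReal.tendsto 0).comp h1
        rw [ENNReal.ofReal_zero] at h3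
        exact h3
      have h4 := ENNReal.Tendsto.mul_const h2 (Or.inr hCfin)
      rw [zero_mul] at h4
      exact le_antisymm (ge_of_tendsto' h4 hNle) zero_le
    have hcover : C ⊆ N ∪ (Ht 0 ∪ ⋃ j : ℕ, (Ht (j+1) \ Ht j)) := by
      intro x hx
      by_cases hxU : x ∈ ⋃ j, Ht j
      · right
        have hex : ∃ j, x ∈ Ht j := Set.mem_iUnion.mp hxU
        rcases Nat.eq_zero_or_pos (Nat.find hex) with h0 | hpos
        · left
          have := Nat.find_spec hex
          rwa [h0] at this
        · right
          obtain ⟨k, hk⟩ := Nat.exists_eq_succ_of_ne_zero (Nat.pos_iff_ne_zero.mp hpos)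
          refine Set.mem_iUnion.mpr ⟨k, ?_, ?_⟩
          · have := Nat.find_spec hex
            rwa [hk] at this
          · exact Nat.find_min hex (by omega)
      · exact Or.inl ⟨hx, hxU⟩
    have hres : (μH[(n:ℝ)-1] : Measure (Euc n)).restrict C
        ≤ (μH[(n:ℝ)-1] : Measure (Euc n)).restrict N
          + ((μH[(n:ℝ)-1] : Measure (Euc n)).restrict (Ht 0)
            + Measure.sum (fun j : ℕ =>
                (μH[(n:ℝ)-1] : Measure (Euc n)).restrict (Ht (j+1) \ Ht j))) := by
      refine (Measure.restrict_mono hcover le_rfl).trans ?_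
      refine (Measure.restrict_union_le _ _).trans ?_
      exact add_le_add le_rfl ((Measure.restrict_union_le _ _).trans
        (add_le_add le_rfl Measure.restrict_iUnion_le))
    have hsplit : ∫⁻ x in C, f x ∂μH[(n:ℝ)-1]
        ≤ (∫⁻ x in N, f x ∂μH[(n:ℝ)-1]) + ((∫⁻ x in Ht 0, f x ∂μH[(n:ℝ)-1])
            + ∑' j : ℕ, ∫⁻ x in (Ht (j+1) \ Ht j), f x ∂μH[(n:ℝ)-1]) := by
      have h5 := lintegral_mono' hres (le_refl f)
      rwa [lintegral_add_measure, lintegral_add_measure, lintegral_sum_measure] at h5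
    have hNterm : ∫⁻ x in N, f x ∂μH[(n:ℝ)-1] = 0 := by
      rw [Measure.restrict_eq_zero.mpr hNzero, lintegral_zero_measure]
    have hHtcomp : ∀ j, IsCompact (Ht j) := fun j =>
      (projHyper_isCompact hKc).image (AffineMap.homothety_continuous _ _)
    have hT2 : ∫⁻ x in Ht 0, f x ∂μH[(n:ℝ)-1] ≤ ENNReal.ofReal ((2*r)^q) * μH[(n:ℝ)-1] C := by
      have hpt : ∀ z ∈ Ht 0, f z ≤ ENNReal.ofReal ((2*r)^q) := by
        intro z hz
        have hXz : 2*r ≤ xray K z u := by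
          have h6 := hXHt 0 z hz
          simpa using h6
        have hXzpos : 0 < xray K z u := lt_of_lt_of_le (by positivity) hXz
        simp only [f]
        apply ENNReal.ofReal_le_ofReal
        rw [cpow, if_neg (ne_of_gt hXzpos)]
        exact Real.rpow_le_rpow_of_nonpos (by positivity) hXz hq0.le
      calc ∫⁻ x in Ht 0, f x ∂μH[(n:ℝ)-1]
          ≤ ∫⁻ _x in Ht 0, ENNReal.ofReal ((2*r)^q) ∂μH[(n:ℝ)-1] :=
            setLIntegral_mono' (hHtcomp 0).isClosed.measurableSet hpt
        _ = ENNReal.ofReal ((2*r)^q) * μH[(n:ℝ)-1] (Ht 0) := setLIntegral_const _ _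
        _ ≤ ENNReal.ofReal ((2*r)^q) * μH[(n:ℝ)-1] C :=
            mul_le_mul_right (measure_mono (hHtsub 0)) _
    have hT3 : ∀ j : ℕ, ∫⁻ x in (Ht (j+1) \ Ht j), f x ∂μH[(n:ℝ)-1]
        ≤ ENNReal.ofReal ((2*r*(1/2)^(j+1))^q)
          * (ENNReal.ofReal (((n:ℝ)-1)*(1/2)^j) * μH[(n:ℝ)-1] C) := by
      intro j
      have hmeas : MeasurableSet (Ht (j+1) \ Ht j) :=
        ((hHtcomp (j+1)).isClosed.measurableSet).diff ((hHtcomp j).isClosed.measurableSet)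
      have hpt : ∀ z ∈ Ht (j+1) \ Ht j, f z ≤ ENNReal.ofReal ((2*r*(1/2)^(j+1))^q) := by
        intro z hz
        have hXz := hXHt (j+1) z hz.1
        have hXzpos : 0 < xray K z u := lt_of_lt_of_le (by positivity) hXz
        simp only [f]
        apply ENNReal.ofReal_le_ofReal
        rw [cpow, if_neg (ne_of_gt hXzpos)]
        exact Real.rpow_le_rpow_of_nonpos (by positivity) hXz hq0.le
      calc ∫⁻ x in (Ht (j+1) \ Ht j), f x ∂μH[(n:ℝ)-1]
          ≤ ∫⁻ _x in (Ht (j+1) \ Ht j), ENNReal.ofReal ((2*r*(1/2)^(j+1))^q) ∂μH[(n:ℝ)-1] :=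
            setLIntegral_mono' hmeas hpt
        _ = ENNReal.ofReal ((2*r*(1/2)^(j+1))^q) * μH[(n:ℝ)-1] (Ht (j+1) \ Ht j) :=
            setLIntegral_const _ _
        _ ≤ _ := mul_le_mul_right
            ((measure_mono (Set.diff_subset_diff_left (hHtsub (j+1)))).trans (hdiff j)) _
    have hsum3 : ∑' j : ℕ, ∫⁻ x in (Ht (j+1) \ Ht j), f x ∂μH[(n:ℝ)-1]
        ≤ (∑' j : ℕ, ENNReal.ofReal ((2*r*(1/2)^(j+1))^q)
            * ENNReal.ofReal (((n:ℝ)-1)*(1/2)^j)) * μH[(n:ℝ)-1] C := by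
      rw [← ENNReal.tsum_mul_right]
      exact ENNReal.tsum_le_tsum (fun j => (hT3 j).trans_eq (mul_assoc _ _ _).symm)
    refine hsplit.trans ?_
    rw [hNterm, zero_add]
    calc (∫⁻ x in Ht 0, f x ∂μH[(n:ℝ)-1])
          + ∑' j : ℕ, ∫⁻ x in (Ht (j+1) \ Ht j), f x ∂μH[(n:ℝ)-1]
        ≤ ENNReal.ofReal ((2*r)^q) * μH[(n:ℝ)-1] C
          + (∑' j : ℕ, ENNReal.ofReal ((2*r*(1/2)^(j+1))^q)
              * ENNReal.ofReal (((n:ℝ)-1)*(1/2)^j)) * μH[(n:ℝ)-1] C := add_le_add hT2 hsum3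
      _ = (ENNReal.ofReal ((2*r)^q)
            + ∑' j : ℕ, ENNReal.ofReal ((2*r*(1/2)^(j+1))^q)
              * ENNReal.ofReal (((n:ℝ)-1)*(1/2)^j)) * μH[(n:ℝ)-1] C := (add_mul _ _ _).symm
      _ ≤ _ := mul_le_mul le_add_self hCle zero_le zero_le

lemma tsum_ring_ne_top {r q : ℝ} (hr : 0 < r) (hq : -1 < q) (hnn : (0:ℝ) ≤ (n:ℝ)-1) :
    (∑' j : ℕ, ENNReal.ofReal ((2*r*(1/2)^(j+1))^q)
        * ENNReal.ofReal (((n:ℝ)-1)*(1/2)^j)) ≠ ⊤ := by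
  have hhalf : (0:ℝ) < 1/2 := by norm_num
  have hpow : ∀ (k:ℕ), ((1/2:ℝ)^k)^q = ((1/2:ℝ)^q)^k := by
    intro k
    rw [← Real.rpow_natCast (1/2:ℝ) k, ← Real.rpow_mul hhalf.le,
      ← Real.rpow_natCast ((1/2:ℝ)^q) k, ← Real.rpow_mul hhalf.le, mul_comm]
  have hreal : ∀ j : ℕ, ((2*r*(1/2)^(j+1):ℝ)^q) * (((n:ℝ)-1)*(1/2)^j)
      = ((2*r)^q * ((1/2:ℝ)^q) * ((n:ℝ)-1)) * (((1/2:ℝ)^q * (1/2:ℝ))^j) := by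
    intro j
    rw [Real.mul_rpow (by positivity) (by positivity), hpow (j+1), mul_pow]
    ring
  have hterm : ∀ j : ℕ, ENNReal.ofReal ((2*r*(1/2)^(j+1))^q)
      * ENNReal.ofReal (((n:ℝ)-1)*(1/2)^j)
      = ENNReal.ofReal ((2*r)^q * ((1/2:ℝ)^q) * ((n:ℝ)-1))
        * ENNReal.ofReal ((1/2:ℝ)^q * (1/2:ℝ)) ^ j := by
    intro j
    rw [← ENNReal.ofReal_mul (by positivity), hreal j,
      ENNReal.ofReal_mul (by positivity), ENNReal.ofReal_pow (by positivity)]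
  have hρeq : ((1/2:ℝ)^q * (1/2:ℝ)) = (1/2:ℝ)^(q+1) := by
    have h7 := (Real.rpow_add hhalf q 1).symm
    rwa [Real.rpow_one] at h7
  have hρ1 : ((1/2:ℝ)^q * (1/2:ℝ)) < 1 := by
    rw [hρeq]
    exact Real.rpow_lt_one (by norm_num) (by norm_num) (by linarith)
  have hρlt : ENNReal.ofReal ((1/2:ℝ)^q * (1/2:ℝ)) < 1 := ENNReal.ofReal_lt_one.mpr hρ1
  have hsum_eq : (∑' j : ℕ, ENNReal.ofReal ((2*r*(1/2)^(j+1))^q)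
        * ENNReal.ofReal (((n:ℝ)-1)*(1/2)^j))
      = ENNReal.ofReal ((2*r)^q * ((1/2:ℝ)^q) * ((n:ℝ)-1))
          * (1 - ENNReal.ofReal ((1/2:ℝ)^q * (1/2:ℝ)))⁻¹ := by
    rw [tsum_congr hterm, ENNReal.tsum_mul_left, ENNReal.tsum_geometric]
  rw [hsum_eq]
  exact ENNReal.mul_ne_top ENNReal.ofReal_ne_top
    (ENNReal.inv_ne_top.mpr (ne_of_gt (tsub_pos_iff_lt.mpr hρlt)))

end ChordCore

/-- **Finiteness of chord integrals** (Lemma 3.1). For `q > -1` and every convex body `K`,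
the chord integral `I_q(K)` is finite, i.e. the defining iterated integral is finite. -/
theorem chord_integral_finite
    (n : ℕ) (hn : 2 ≤ n) (q : ℝ) (hq : -1 < q)
    (K : Set (Euc n)) (hK : IsConvexBody K) :
    (∫⁻ u in sph n, (∫⁻ x in projHyper u K,
        ENNReal.ofReal (cpow (xray K x u) q) ∂μH[(n : ℝ) - 1]) ∂μH[(n : ℝ) - 1]) ≠ ∞ := by
  obtain ⟨hKc, hKv, hKi⟩ := hK
  obtain ⟨c₀, hc₀⟩ := hKi
  obtain ⟨ε, hε, hball0⟩ := Metric.isOpen_iff.mp isOpen_interior c₀ hc₀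
  have hr : (0:ℝ) < ε/2 := by linarith
  have hball : Metric.closedBall c₀ (ε/2) ⊆ K :=
    (Metric.closedBall_subset_ball (by linarith)).trans (hball0.trans interior_subset)
  obtain ⟨R, hKR⟩ := hKc.isBounded.subset_closedBall 0
  have hn2R : (2:ℝ) ≤ (n:ℝ) := by exact_mod_cast hn
  set T : ℝ≥0∞ := ENNReal.ofReal ((Metric.diam K + 1)^q) + (ENNReal.ofReal ((2*(ε/2))^q)
          + ∑' j : ℕ, ENNReal.ofReal ((2*(ε/2)*(1/2)^(j+1))^q)
              * ENNReal.ofReal (((n:ℝ)-1)*(1/2)^j)) with hT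
  set VB := μH[((n-1:ℕ):ℝ)] (Metric.closedBall (0 : EuclideanSpace ℝ (Fin (n-1))) R) with hVB
  have hkey : ∀ u ∈ sph n, ∫⁻ x in projHyper u K,
      ENNReal.ofReal (cpow (xray K x u) q) ∂μH[(n:ℝ)-1] ≤ T * VB := by
    intro u hu
    exact inner_le hn hKc hKv hr hball hKR hq (mem_sphere_zero_iff_norm.mp hu)
  have hsph : MeasurableSet (sph n) :=
    (Metric.isClosed_sphere : IsClosed (Metric.sphere (0 : Euc n) 1)).measurableSet
  have hTne : T ≠ ⊤ :=
    ENNReal.add_ne_top.mpr ⟨ENNReal.ofReal_ne_top,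
      ENNReal.add_ne_top.mpr ⟨ENNReal.ofReal_ne_top, tsum_ring_ne_top hr hq (by linarith)⟩⟩
  have hfin : (T * VB) * μH[(n:ℝ)-1] (sph n) ≠ ⊤ :=
    ENNReal.mul_ne_top (ENNReal.mul_ne_top hTne (aux_pi_ball (n-1) R)) (aux_sphere hn)
  refine ne_top_of_le_ne_top hfin ?_
  calc ∫⁻ u in sph n, (∫⁻ x in projHyper u K,
        ENNReal.ofReal (cpow (xray K x u) q) ∂μH[(n : ℝ) - 1]) ∂μH[(n : ℝ) - 1]
      ≤ ∫⁻ _u in sph n, T * VB ∂μH[(n : ℝ) - 1] := setLIntegral_mono' hsph hkey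
    _ = (T * VB) * μH[(n:ℝ)-1] (sph n) := setLIntegral_const _ _

end ChordDoc
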